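/- Let ρ(x) = (−7 − 9^x + 4^{x+1}) / (2(4 − 4^x)) for x ∈ (0,1). Then ρ is strictly increasing on (0,1); equivalently, its derivative ρ'(x) = (−4·9^x·ln 9 + 9·4^x·ln 4 + 36^x·ln(9/4)) / (2(4 − 4^x)^2) is strictly positive for every x ∈ (0,1). -/

import Mathlib

open Real

lemma rho_numer_pos {x : ℝ} (hx0 : 0 < x) (hx1 : x < 1) :
    0 < -4 * (9 : ℝ) ^ x * Real.log 9 + 9 * (4 : ℝ) ^ x * Real.log 4
        + (36 : ℝ) ^ x * Real.log (9 / 4) := by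
  have hL4 : (0:ℝ) < Real.log 4 := Real.log_pos (by norm_num)
  have hL9 : (0:ℝ) < Real.log 9 := Real.log_pos (by norm_num)
  set a := (4:ℝ)^x with ha
  set b := (9:ℝ)^x with hb
  set u := (4:ℝ)^(1-x) with hu
  set v := (9:ℝ)^(1-x) with hv
  have hapos : (0:ℝ) < a := Real.rpow_pos_of_pos (by norm_num) _
  have hbpos : (0:ℝ) < b := Real.rpow_pos_of_pos (by norm_num) _
  have h1 : a * u = 4 := by
    rw [ha, hu, ← Real.rpow_add (by norm_num)]
    norm_num
  have h2 : b * v = 9 := by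
    rw [hb, hv, ← Real.rpow_add (by norm_num)]
    norm_num
  have hu1 : 1 < u := by
    rw [hu]
    exact Real.one_lt_rpow_iff_of_pos (by norm_num) |>.mpr (Or.inl ⟨by norm_num, by linarith⟩)
  have hc1 : 1 < Real.log 9 / Real.log 4 := by
    rw [lt_div_iff₀ hL4, one_mul]
    exact Real.log_lt_log (by norm_num) (by norm_num)
  have hvu : v = u ^ (Real.log 9 / Real.log 4) := by
    rw [hv, hu, ← Real.rpow_mul (by norm_num),
      Real.rpow_def_of_pos (show (0:ℝ) < 4 by norm_num),
      Real.rpow_def_of_pos (show (0:ℝ) < 9 by norm_num)]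
    congr 1
    field_simp
  have hbern : 1 + (Real.log 9 / Real.log 4) * (u - 1) < v := by
    rw [hvu]
    have := one_add_mul_self_lt_rpow_one_add (s := u - 1)
      (by linarith) (by intro h; linarith [sub_eq_zero.mp h]) hc1
    simpa using this
  have hkey : Real.log 9 * (u - 1) < Real.log 4 * (v - 1) := by
    have h9 : Real.log 9 = Real.log 4 * (Real.log 9 / Real.log 4) := by
      field_simp
    have hlt : (Real.log 9 / Real.log 4) * (u - 1) < v - 1 := by linarith
    calc Real.log 9 * (u - 1)
        = Real.log 4 * ((Real.log 9 / Real.log 4) * (u - 1)) := by field_simp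
      _ < Real.log 4 * (v - 1) := (mul_lt_mul_iff_right₀ hL4).mpr hlt
  have hab : (36:ℝ)^x = a * b := by
    rw [ha, hb, show (36:ℝ) = 4 * 9 by norm_num,
      Real.mul_rpow (by norm_num) (by norm_num)]
  have hlog94 : Real.log (9/4) = Real.log 9 - Real.log 4 :=
    Real.log_div (by norm_num) (by norm_num)
  rw [hab, hlog94]
  have hkey' := mul_lt_mul_of_pos_left hkey (mul_pos hapos hbpos)
  have h3 : a * b * (Real.log 9 * (u - 1)) = Real.log 9 * (4 * b - a * b) := by
    rw [← h1]; ring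
  have h4 : a * b * (Real.log 4 * (v - 1)) = Real.log 4 * (9 * a - a * b) := by
    rw [← h2]; ring
  rw [h3, h4] at hkey'
  nlinarith [hkey']

theorem rho_strictMonoOn_and_deriv_pos :
    StrictMonoOn (fun y : ℝ => (-7 - (9 : ℝ) ^ y + (4 : ℝ) ^ (y + 1)) / (2 * (4 - (4 : ℝ) ^ y)))
      (Set.Ioo (0 : ℝ) 1) ∧
    ∀ x ∈ Set.Ioo (0 : ℝ) 1,
      0 < (-4 * (9 : ℝ) ^ x * Real.log 9 + 9 * (4 : ℝ) ^ x * Real.log 4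
          + (36 : ℝ) ^ x * Real.log (9 / 4)) / (2 * (4 - (4 : ℝ) ^ x) ^ 2) := by
  have hlt : ∀ x ∈ Set.Ioo (0:ℝ) 1, (4:ℝ)^x < 4 := by
    intro x hx
    calc (4:ℝ)^x < (4:ℝ)^(1:ℝ) := by
          exact Real.rpow_lt_rpow_left_iff (by norm_num) |>.mpr hx.2
      _ = 4 := Real.rpow_one 4
  have hpos : ∀ x ∈ Set.Ioo (0:ℝ) 1,
      0 < (-4 * (9 : ℝ) ^ x * Real.log 9 + 9 * (4 : ℝ) ^ x * Real.log 4
          + (36 : ℝ) ^ x * Real.log (9 / 4)) / (2 * (4 - (4 : ℝ) ^ x) ^ 2) := by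
    intro x hx
    apply div_pos (rho_numer_pos hx.1 hx.2)
    have := hlt x hx
    have h0 : (0:ℝ) < 4 - (4:ℝ)^x := by linarith
    positivity
  refine ⟨?_, hpos⟩
  have hder : ∀ x ∈ Set.Ioo (0:ℝ) 1,
      HasDerivAt (fun y : ℝ => (-7 - (9 : ℝ) ^ y + (4 : ℝ) ^ (y + 1)) / (2 * (4 - (4 : ℝ) ^ y)))
        ((-4 * (9 : ℝ) ^ x * Real.log 9 + 9 * (4 : ℝ) ^ x * Real.log 4
          + (36 : ℝ) ^ x * Real.log (9 / 4)) / (2 * (4 - (4 : ℝ) ^ x) ^ 2)) x := by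
    intro x hx
    have h9 : HasDerivAt (fun y : ℝ => (9:ℝ)^y) ((9:ℝ)^x * Real.log 9) x :=
      (Real.hasStrictDerivAt_const_rpow (by norm_num) x).hasDerivAt
    have h4 : HasDerivAt (fun y : ℝ => (4:ℝ)^y) ((4:ℝ)^x * Real.log 4) x :=
      (Real.hasStrictDerivAt_const_rpow (by norm_num) x).hasDerivAt
    have h41 : HasDerivAt (fun y : ℝ => (4:ℝ)^(y+1)) ((4:ℝ)^(x+1) * Real.log 4 * 1) x :=
      ((Real.hasStrictDerivAt_const_rpow (show (0:ℝ) < 4 by norm_num) (x+1)).hasDerivAt).comp x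
        ((hasDerivAt_id x).add_const 1)
    have hN : HasDerivAt (fun y : ℝ => -7 - (9:ℝ)^y + (4:ℝ)^(y+1))
        (0 - (9:ℝ)^x * Real.log 9 + (4:ℝ)^(x+1) * Real.log 4 * 1) x :=
      ((hasDerivAt_const x (-7:ℝ)).sub h9).add h41
    have hD : HasDerivAt (fun y : ℝ => 2 * (4 - (4:ℝ)^y))
        (2 * (0 - (4:ℝ)^x * Real.log 4)) x :=
      ((hasDerivAt_const x (4:ℝ)).sub h4).const_mul 2
    have hne : 2 * (4 - (4:ℝ)^x) ≠ 0 := by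
      have := hlt x hx; intro h; nlinarith
    have := hN.div hD hne
    refine this.congr_deriv ?_
    have hx4 : (4:ℝ)^(x+1) = 4 * (4:ℝ)^x := by
      rw [Real.rpow_add (by norm_num), Real.rpow_one]; ring
    have hab : (36:ℝ)^x = (4:ℝ)^x * (9:ℝ)^x := by
      rw [show (36:ℝ) = 4 * 9 by norm_num, Real.mul_rpow (by norm_num) (by norm_num)]
    have hlog94 : Real.log (9/4) = Real.log 9 - Real.log 4 :=
      Real.log_div (by norm_num) (by norm_num)
    have hne' : 4 - (4:ℝ)^x ≠ 0 := by
      have := hlt x hx; intro h; linarith [h]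
    rw [hx4, hab, hlog94]
    field_simp
    ring
  apply strictMonoOn_of_deriv_pos (convex_Ioo 0 1)
  · intro x hx
    exact (hder x hx).continuousAt.continuousWithinAt
  · intro x hx
    rw [interior_Ioo] at hx
    rw [(hder x hx).deriv]
    exact hpos x hx
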